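/- In a Cartesian reverse differential category with induced differential D[f] = (⟨1,0⟩×1)R[R[f]]π₁ and dagger f† := ι₁R[f], the following are equivalent for f : A → B: (1) f is linear (D[f] = π₁f); (2) ι₁(ι₀×1)R[R[f]]π₁ = f; (3) f†† = f. -/

import Mathlib

universe u v

/-- A Cartesian left additive category, with composition written in diagrammatic order:
`comp f g` is "`f` followed by `g`". -/
structure CLACat where
  Obj : Type u
  Hom : Obj → Obj → Type v
  id : ∀ A, Hom A A
  comp : ∀ {A B C}, Hom A B → Hom B C → Hom A C
  id_comp : ∀ {A B} (f : Hom A B), comp (id A) f = f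
  comp_id : ∀ {A B} (f : Hom A B), comp f (id B) = f
  assoc : ∀ {A B C D} (f : Hom A B) (g : Hom B C) (h : Hom C D),
    comp (comp f g) h = comp f (comp g h)
  /-- chosen binary product on objects -/
  prod : Obj → Obj → Obj
  /-- first projection -/
  p0 : ∀ {A B}, Hom (prod A B) A
  /-- second projection -/
  p1 : ∀ {A B}, Hom (prod A B) B
  /-- pairing -/
  pair : ∀ {C A B}, Hom C A → Hom C B → Hom C (prod A B)
  pair_p0 : ∀ {C A B} (f : Hom C A) (g : Hom C B), comp (pair f g) p0 = f
  pair_p1 : ∀ {C A B} (f : Hom C A) (g : Hom C B), comp (pair f g) p1 = g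
  pair_unique : ∀ {C A B} (h : Hom C (prod A B)), pair (comp h p0) (comp h p1) = h
  /-- chosen terminal object -/
  one : Obj
  bang : ∀ A, Hom A one
  bang_unique : ∀ {A} (f : Hom A one), f = bang A
  /-- commutative monoid structure on each hom-set -/
  add : ∀ {A B}, Hom A B → Hom A B → Hom A B
  zero : ∀ {A B}, Hom A B
  add_assoc' : ∀ {A B} (f g h : Hom A B), add (add f g) h = add f (add g h)
  add_comm' : ∀ {A B} (f g : Hom A B), add f g = add g f
  add_zero' : ∀ {A B} (f : Hom A B), add f zero = f
  /-- composition on the left preserves addition -/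
  comp_add : ∀ {A B C} (x : Hom A B) (f g : Hom B C),
    comp x (add f g) = add (comp x f) (comp x g)
  comp_zero : ∀ {A B C} (x : Hom A B), comp x (zero : Hom B C) = (zero : Hom A C)
  /-- projections are additive -/
  add_comp_p0 : ∀ {C A B} (f g : Hom C (prod A B)),
    comp (add f g) p0 = add (comp f p0) (comp g p0)
  zero_comp_p0 : ∀ {C A B}, comp (zero : Hom C (prod A B)) p0 = (zero : Hom C A)
  add_comp_p1 : ∀ {C A B} (f g : Hom C (prod A B)),
    comp (add f g) p1 = add (comp f p1) (comp g p1)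
  zero_comp_p1 : ∀ {C A B}, comp (zero : Hom C (prod A B)) p1 = (zero : Hom C B)

namespace CLACat

variable (X : CLACat)

/-- first injection ι₀ := ⟨1,0⟩ : A → A×B -/
def i0 {A B : X.Obj} : X.Hom A (X.prod A B) := X.pair (X.id A) X.zero

/-- second injection ι₁ := ⟨0,1⟩ : B → A×B -/
def i1 {A B : X.Obj} : X.Hom B (X.prod A B) := X.pair X.zero (X.id B)

/-- the product map h×k -/
def prodMap {A B C D : X.Obj} (h : X.Hom A B) (k : X.Hom C D) :
    X.Hom (X.prod A C) (X.prod B D) :=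
  X.pair (X.comp X.p0 h) (X.comp X.p1 k)

/-- the exchange isomorphism ex := ⟨π₀×π₀, π₁×π₁⟩ -/
def ex {A B C D : X.Obj} :
    X.Hom (X.prod (X.prod A B) (X.prod C D)) (X.prod (X.prod A C) (X.prod B D)) :=
  X.pair (X.prodMap X.p0 X.p0) (X.prodMap X.p1 X.p1)

/-- a map is additive when precomposition with it preserves the additive structure -/
def Additive {A B : X.Obj} (h : X.Hom A B) : Prop :=
  (∀ {C : X.Obj} (x y : X.Hom C A), X.comp (X.add x y) h = X.add (X.comp x h) (X.comp y h)) ∧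
  (∀ {C : X.Obj}, X.comp (X.zero : X.Hom C A) h = X.zero)

end CLACat
/-- The axioms of a Cartesian differential category, for a differential combinator `D`
on a Cartesian left additive category `X`. -/
structure CDCAxioms (X : CLACat)
    (D : ∀ {A B : X.Obj}, X.Hom A B → X.Hom (X.prod A A) B) : Prop where
  cdc1_add : ∀ {A B} (f g : X.Hom A B), D (X.add f g) = X.add (D f) (D g)
  cdc1_zero : ∀ {A B}, D (X.zero : X.Hom A B) = X.zero
  cdc2_add : ∀ {C A B} (a b c : X.Hom C A) (f : X.Hom A B),
    X.comp (X.pair a (X.add b c)) (D f)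
      = X.add (X.comp (X.pair a b) (D f)) (X.comp (X.pair a c) (D f))
  cdc2_zero : ∀ {C A B} (a : X.Hom C A) (f : X.Hom A B),
    X.comp (X.pair a X.zero) (D f) = X.zero
  cdc3_id : ∀ {A}, D (X.id A) = X.p1
  cdc3_p0 : ∀ {A B}, D (X.p0 : X.Hom (X.prod A B) A) = X.comp X.p1 X.p0
  cdc3_p1 : ∀ {A B}, D (X.p1 : X.Hom (X.prod A B) B) = X.comp X.p1 X.p1
  cdc4 : ∀ {A B C} (f : X.Hom A B) (g : X.Hom A C),
    D (X.pair f g) = X.pair (D f) (D g)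
  cdc5 : ∀ {A B C} (f : X.Hom A B) (g : X.Hom B C),
    D (X.comp f g) = X.comp (X.pair (X.comp X.p0 f) (D f)) (D g)
  cdc6 : ∀ {C A B} (a b c : X.Hom C A) (f : X.Hom A B),
    X.comp (X.pair (X.pair a b) (X.pair X.zero c)) (D (D f)) = X.comp (X.pair a c) (D f)
  cdc7 : ∀ {C A B} (a b c d : X.Hom C A) (f : X.Hom A B),
    X.comp (X.pair (X.pair a b) (X.pair c d)) (D (D f))
      = X.comp (X.pair (X.pair a c) (X.pair b d)) (D (D f))

namespace CLACat

/-- The forward differential combinator induced by a reverse differential combinator: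
`D[f] := (⟨1,0⟩ × 1) R[R[f]] π₁`. -/
def Dof (X : CLACat) (R : ∀ {A B : X.Obj}, X.Hom A B → X.Hom (X.prod A B) A)
    {A B : X.Obj} (f : X.Hom A B) : X.Hom (X.prod A A) B :=
  X.comp (X.prodMap X.i0 (X.id A)) (X.comp (R (R f)) X.p1)

/-- The dagger induced by a reverse differential combinator: `f† := ι₁ R[f]`. -/
def dag (X : CLACat) (R : ∀ {A B : X.Obj}, X.Hom A B → X.Hom (X.prod A B) A)
    {A B : X.Obj} (f : X.Hom A B) : X.Hom B A :=
  X.comp X.i1 (R f)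

end CLACat

/-- The axioms of a Cartesian reverse differential category, for a reverse differential
combinator `R` on a Cartesian left additive category `X`. -/
structure RDCAxioms (X : CLACat)
    (R : ∀ {A B : X.Obj}, X.Hom A B → X.Hom (X.prod A B) A) : Prop where
  rd1_add : ∀ {A B} (f g : X.Hom A B), R (X.add f g) = X.add (R f) (R g)
  rd1_zero : ∀ {A B}, R (X.zero : X.Hom A B) = X.zero
  rd2_add : ∀ {C A B} (a : X.Hom C A) (b c : X.Hom C B) (f : X.Hom A B),
    X.comp (X.pair a (X.add b c)) (R f)
      = X.add (X.comp (X.pair a b) (R f)) (X.comp (X.pair a c) (R f))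
  rd2_zero : ∀ {C A B} (a : X.Hom C A) (f : X.Hom A B),
    X.comp (X.pair a X.zero) (R f) = X.zero
  rd3_id : ∀ {A}, R (X.id A) = X.p1
  rd3_p0 : ∀ {A B}, R (X.p0 : X.Hom (X.prod A B) A) = X.comp X.p1 X.i0
  rd3_p1 : ∀ {A B}, R (X.p1 : X.Hom (X.prod A B) B) = X.comp X.p1 X.i1
  rd4 : ∀ {A B C} (f : X.Hom A B) (g : X.Hom A C),
    R (X.pair f g) = X.add (X.comp (X.prodMap (X.id A) X.p0) (R f))
                           (X.comp (X.prodMap (X.id A) X.p1) (R g))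
  rd4_bang : ∀ {A}, R (X.bang A) = X.zero
  rd5 : ∀ {A B C} (f : X.Hom A B) (g : X.Hom B C),
    R (X.comp f g) = X.comp (X.pair X.p0 (X.pair (X.comp X.p0 f) X.p1))
                            (X.comp (X.prodMap (X.id A) (R g)) (R f))
  rd6 : ∀ {A B} (f : X.Hom A B),
    X.comp (X.pair (X.prodMap (X.id A) X.p0) (X.prodMap (X.zero : X.Hom A A) X.p1))
      (X.comp (X.prodMap (X.i0 : X.Hom (X.prod A B) (X.prod (X.prod A B) A)) (X.id (X.prod A B)))
        (X.comp (R (R (R f))) X.p1))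
    = X.comp (X.prodMap (X.id A) X.p1) (R f)
  rd7 : ∀ {A B} (f : X.Hom A B),
    X.Dof (fun {_ _} g => R g) (X.Dof (fun {_ _} g => R g) f)
      = X.comp X.ex (X.Dof (fun {_ _} g => R g) (X.Dof (fun {_ _} g => R g) f))


/- Auxiliary infrastructure -/
namespace CLACat

variable {X : CLACat}

@[simp] theorem id_comp' {A B : X.Obj} (f : X.Hom A B) : X.comp (X.id A) f = f := X.id_comp f
@[simp] theorem comp_id' {A B : X.Obj} (f : X.Hom A B) : X.comp f (X.id B) = f := X.comp_id f
@[simp] theorem assoc' {A B C D : X.Obj} (f : X.Hom A B) (g : X.Hom B C) (h : X.Hom C D) :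
    X.comp (X.comp f g) h = X.comp f (X.comp g h) := X.assoc f g h
@[simp] theorem pair_p0' {C A B : X.Obj} (f : X.Hom C A) (g : X.Hom C B) :
    X.comp (X.pair f g) X.p0 = f := X.pair_p0 f g
@[simp] theorem pair_p1' {C A B : X.Obj} (f : X.Hom C A) (g : X.Hom C B) :
    X.comp (X.pair f g) X.p1 = g := X.pair_p1 f g
@[simp] theorem pair_p0_assoc {C A B D : X.Obj} (f : X.Hom C A) (g : X.Hom C B) (h : X.Hom A D) :
    X.comp (X.pair f g) (X.comp X.p0 h) = X.comp f h := by
  rw [← X.assoc, X.pair_p0]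
@[simp] theorem pair_p1_assoc {C A B D : X.Obj} (f : X.Hom C A) (g : X.Hom C B) (h : X.Hom B D) :
    X.comp (X.pair f g) (X.comp X.p1 h) = X.comp g h := by
  rw [← X.assoc, X.pair_p1]
@[simp] theorem comp_pair {D C A B : X.Obj} (x : X.Hom D C) (f : X.Hom C A) (g : X.Hom C B) :
    X.comp x (X.pair f g) = X.pair (X.comp x f) (X.comp x g) := by
  conv_lhs => rw [← X.pair_unique (X.comp x (X.pair f g))]
  rw [X.assoc, X.assoc, X.pair_p0, X.pair_p1]
@[simp] theorem comp_comp_pair {D C A B E : X.Obj} (x : X.Hom D C) (f : X.Hom C A)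
    (g : X.Hom C B) (h : X.Hom (X.prod A B) E) :
    X.comp x (X.comp (X.pair f g) h) = X.comp (X.pair (X.comp x f) (X.comp x g)) h := by
  rw [← X.assoc, comp_pair]
@[simp] theorem pair_eta {C A B : X.Obj} (h : X.Hom C (X.prod A B)) :
    X.pair (X.comp h X.p0) (X.comp h X.p1) = h := X.pair_unique h
@[simp] theorem pair_proj {A B : X.Obj} :
    X.pair (X.p0 : X.Hom (X.prod A B) A) X.p1 = X.id _ := by
  have h := X.pair_unique (X.id (X.prod A B))
  rwa [X.id_comp, X.id_comp] at h

@[simp] theorem comp_zero' {A B C : X.Obj} (x : X.Hom A B) :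
    X.comp x (X.zero : X.Hom B C) = X.zero := X.comp_zero x
@[simp] theorem zero_comp_p0' {C A B : X.Obj} :
    X.comp (X.zero : X.Hom C (X.prod A B)) X.p0 = X.zero := X.zero_comp_p0
@[simp] theorem zero_comp_p1' {C A B : X.Obj} :
    X.comp (X.zero : X.Hom C (X.prod A B)) X.p1 = X.zero := X.zero_comp_p1
@[simp] theorem zero_comp_p0_assoc {C A B D : X.Obj} (h : X.Hom A D) :
    X.comp (X.zero : X.Hom C (X.prod A B)) (X.comp X.p0 h) = X.comp X.zero h := by
  rw [← X.assoc, X.zero_comp_p0]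
@[simp] theorem zero_comp_p1_assoc {C A B D : X.Obj} (h : X.Hom B D) :
    X.comp (X.zero : X.Hom C (X.prod A B)) (X.comp X.p1 h) = X.comp X.zero h := by
  rw [← X.assoc, X.zero_comp_p1]
@[simp] theorem pair_zero {C A B : X.Obj} :
    X.pair (X.zero : X.Hom C A) (X.zero : X.Hom C B) = X.zero := by
  have h := X.pair_unique (X.zero : X.Hom C (X.prod A B))
  rwa [X.zero_comp_p0, X.zero_comp_p1] at h

@[simp] theorem add_zero'' {A B : X.Obj} (f : X.Hom A B) : X.add f X.zero = f := X.add_zero' f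
@[simp] theorem zero_add'' {A B : X.Obj} (f : X.Hom A B) : X.add X.zero f = f := by
  rw [X.add_comm']; exact X.add_zero' f
@[simp] theorem comp_add' {A B C : X.Obj} (x : X.Hom A B) (f g : X.Hom B C) :
    X.comp x (X.add f g) = X.add (X.comp x f) (X.comp x g) := X.comp_add x f g
@[simp] theorem add_comp_p0' {C A B : X.Obj} (f g : X.Hom C (X.prod A B)) :
    X.comp (X.add f g) X.p0 = X.add (X.comp f X.p0) (X.comp g X.p0) := X.add_comp_p0 f g
@[simp] theorem add_comp_p1' {C A B : X.Obj} (f g : X.Hom C (X.prod A B)) :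
    X.comp (X.add f g) X.p1 = X.add (X.comp f X.p1) (X.comp g X.p1) := X.add_comp_p1 f g
@[simp] theorem add_comp_p0_assoc {C A B D : X.Obj} (f g : X.Hom C (X.prod A B)) (h : X.Hom A D) :
    X.comp (X.add f g) (X.comp X.p0 h) = X.comp (X.add (X.comp f X.p0) (X.comp g X.p0)) h := by
  rw [← X.assoc, X.add_comp_p0]
@[simp] theorem add_comp_p1_assoc {C A B D : X.Obj} (f g : X.Hom C (X.prod A B)) (h : X.Hom B D) :
    X.comp (X.add f g) (X.comp X.p1 h) = X.comp (X.add (X.comp f X.p1) (X.comp g X.p1)) h := by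
  rw [← X.assoc, X.add_comp_p1]
@[simp] theorem add_pair {C A B : X.Obj} (a c : X.Hom C A) (b d : X.Hom C B) :
    X.add (X.pair a b) (X.pair c d) = X.pair (X.add a c) (X.add b d) := by
  have h := X.pair_unique (X.add (X.pair a b) (X.pair c d))
  rw [X.add_comp_p0, X.add_comp_p1, X.pair_p0, X.pair_p1, X.pair_p0, X.pair_p1] at h
  exact h.symm

@[simp] theorem i0_def {A B : X.Obj} : (X.i0 : X.Hom A (X.prod A B)) = X.pair (X.id A) X.zero := rfl
@[simp] theorem i1_def {A B : X.Obj} : (X.i1 : X.Hom B (X.prod A B)) = X.pair X.zero (X.id B) := rfl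
@[simp] theorem prodMap_def {A B C D : X.Obj} (h : X.Hom A B) (k : X.Hom C D) :
    X.prodMap h k = X.pair (X.comp X.p0 h) (X.comp X.p1 k) := rfl

end CLACat

namespace CLACat

section
variable {X : CLACat} (R : ∀ {A B : X.Obj}, X.Hom A B → X.Hom (X.prod A B) A)
variable (hR : RDCAxioms X (fun {_ _} f => R f))
include hR

/-- Composition with a linear map on the left: `R[m g] = (m×1) R[g] m'` when `R[m] = π₁ m'`. -/
theorem F1 {A B C : X.Obj} (m : X.Hom A B) (m' : X.Hom B A)
    (hm : R m = X.comp X.p1 m') (G : X.Hom B C) :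
    R (X.comp m G) = X.comp (X.prodMap m (X.id C)) (X.comp (R G) m') := by
  have h := hR.rd5 m G
  rw [h, hm]
  simp

/-- Composition with a linear map on the right: `R[K p] = (1×p') R[K]` when `R[p] = π₁ p'`. -/
theorem F2 {A B C : X.Obj} (K : X.Hom A B) (p : X.Hom B C) (p' : X.Hom C B)
    (hp : R p = X.comp X.p1 p') :
    R (X.comp K p) = X.comp (X.prodMap (X.id A) p') (R K) := by
  have h := hR.rd5 K p
  rw [h, hp]
  simp

/-- Combination: `R[m (K p)] = (m×1) (1×p') R[K] m'`. -/
theorem F12 {A B C D : X.Obj} (m : X.Hom A B) (m' : X.Hom B A)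
    (hm : R m = X.comp X.p1 m') (K : X.Hom B C) (p : X.Hom C D) (p' : X.Hom D C)
    (hp : R p = X.comp X.p1 p') :
    R (X.comp m (X.comp K p))
      = X.comp (X.prodMap m (X.id D))
          (X.comp (X.prodMap (X.id B) p') (X.comp (R K) m')) := by
  rw [F1 R hR m m' hm (X.comp K p), F2 R hR K p p' hp]
  simp

end

end CLACat

namespace CLACat

section
variable {X : CLACat} (R : ∀ {A B : X.Obj}, X.Hom A B → X.Hom (X.prod A B) A)
variable (hR : RDCAxioms X (fun {_ _} f => R f))
include hR

theorem rd1_zero' {A B : X.Obj} : R (X.zero : X.Hom A B) = X.zero := hR.rd1_zero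
theorem rd4' {A B C : X.Obj} (f : X.Hom A B) (g : X.Hom A C) :
    R (X.pair f g) = X.add (X.comp (X.prodMap (X.id A) X.p0) (R f))
      (X.comp (X.prodMap (X.id A) X.p1) (R g)) := hR.rd4 f g

/-- `Rlin h h'` means `R h = π₁ h'`, i.e. `h` is linear with transpose `h'`. -/
theorem rlin_id {A : X.Obj} : R (X.id A) = X.comp X.p1 (X.id A) := by
  have h : R (X.id A) = X.p1 := hR.rd3_id
  rw [h]; simp
theorem rlin_zero {A B : X.Obj} :
    R (X.zero : X.Hom A B) = X.comp X.p1 (X.zero : X.Hom B A) := by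
  rw [rd1_zero' R hR]; simp
theorem rlin_p0 {A B : X.Obj} :
    R (X.p0 : X.Hom (X.prod A B) A) = X.comp X.p1 X.i0 := hR.rd3_p0
theorem rlin_p1 {A B : X.Obj} :
    R (X.p1 : X.Hom (X.prod A B) B) = X.comp X.p1 X.i1 := hR.rd3_p1

theorem rlin_comp {A B C : X.Obj} (m : X.Hom A B) (m' : X.Hom B A)
    (hm : R m = X.comp X.p1 m') (g : X.Hom B C) (g' : X.Hom C B)
    (hg : R g = X.comp X.p1 g') :
    R (X.comp m g) = X.comp X.p1 (X.comp g' m') := by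
  rw [F1 R hR m m' hm g, hg]; simp

theorem rlin_pair {A B C : X.Obj} (f : X.Hom A B) (f' : X.Hom B A)
    (hf : R f = X.comp X.p1 f') (g : X.Hom A C) (g' : X.Hom C A)
    (hg : R g = X.comp X.p1 g') :
    R (X.pair f g) = X.comp X.p1 (X.add (X.comp X.p0 f') (X.comp X.p1 g')) := by
  rw [rd4' R hR, hf, hg]; simp

theorem rlin_prodMap {A B C D : X.Obj} (h : X.Hom A B) (h' : X.Hom B A)
    (hh : R h = X.comp X.p1 h') (k : X.Hom C D) (k' : X.Hom D C)
    (hk : R k = X.comp X.p1 k') :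
    R (X.prodMap h k) = X.comp X.p1 (X.prodMap h' k') := by
  rw [prodMap_def,
    rlin_pair R hR _ (X.comp h' X.i0) (rlin_comp R hR _ _ (rlin_p0 R hR) _ _ hh)
      _ (X.comp k' X.i1) (rlin_comp R hR _ _ (rlin_p1 R hR) _ _ hk)]
  simp

theorem rlin_i1 {A B : X.Obj} :
    R (X.i1 : X.Hom B (X.prod A B)) = X.comp X.p1 X.p1 := by
  rw [i1_def, rlin_pair R hR _ _ (rlin_zero R hR) _ _ (rlin_id R hR)]
  simp

theorem rlin_i0 {A B : X.Obj} :
    R (X.i0 : X.Hom A (X.prod A B)) = X.comp X.p1 X.p0 := by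
  rw [i0_def, rlin_pair R hR _ _ (rlin_id R hR) _ _ (rlin_zero R hR)]
  simp

end

end CLACat

namespace CLACat

@[simp] theorem Dof_def {X : CLACat} (R : ∀ {A B : X.Obj}, X.Hom A B → X.Hom (X.prod A B) A)
    {A B : X.Obj} (f : X.Hom A B) :
    X.Dof (fun {_ _} g => R g) f
      = X.comp (X.prodMap X.i0 (X.id A)) (X.comp (R (R f)) X.p1) := rfl

section
variable {X : CLACat} (R : ∀ {A B : X.Obj}, X.Hom A B → X.Hom (X.prod A B) A)
variable (hR : RDCAxioms X (fun {_ _} f => R f))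
include hR

/-- The double dagger `f†† = ι₁ R[R[f]] π₁` is linear. -/
theorem dagdag_linear {A B : X.Obj} (f : X.Hom A B) :
    X.Dof (fun {_ _} h => R h) (X.comp X.i1 (X.comp (R (R f)) X.p1))
      = X.comp X.p1 (X.comp X.i1 (X.comp (R (R f)) X.p1)) := by
  have hg : R (X.comp X.i1 (X.comp (R (R f)) X.p1))
      = X.comp (X.comp (X.prodMap X.i1 (X.id B))
            (X.prodMap (X.id (X.prod (X.prod A B) A)) X.i1))
          (X.comp (R (R (R f))) X.p1) := by
    rw [F12 R hR X.i1 X.p1 (rlin_i1 R hR) (R (R f)) X.p1 X.i1 (rlin_p1 R hR)]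
    simp only [assoc']
  have hM1 : R (X.comp (X.prodMap (X.i1 : X.Hom A (X.prod (X.prod A B) A)) (X.id B))
        (X.prodMap (X.id (X.prod (X.prod A B) A)) (X.i1 : X.Hom B (X.prod A B))))
      = X.comp X.p1 (X.comp (X.prodMap (X.id (X.prod (X.prod A B) A)) X.p1)
          (X.prodMap X.p1 (X.id B))) :=
    rlin_comp R hR _ _ (rlin_prodMap R hR _ _ (rlin_i1 R hR) _ _ (rlin_id R hR))
      _ _ (rlin_prodMap R hR _ _ (rlin_id R hR) _ _ (rlin_i1 R hR))
  have hRRg : R (R (X.comp X.i1 (X.comp (R (R f)) X.p1)))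
      = X.comp (X.prodMap (X.comp (X.prodMap X.i1 (X.id B))
            (X.prodMap (X.id (X.prod (X.prod A B) A)) X.i1)) (X.id A))
          (X.comp (X.prodMap (X.id _) X.i1)
            (X.comp (R (R (R (R f))))
              (X.comp (X.prodMap (X.id (X.prod (X.prod A B) A)) X.p1)
                (X.prodMap X.p1 (X.id B))))) := by
    rw [hg]
    exact F12 R hR _ _ hM1 (R (R (R f))) X.p1 X.i1 (rlin_p1 R hR)
  have key := hR.rd6 (R f)
  have key' := congrArg (fun t => X.comp X.i1 (X.comp t X.p1)) key
  rw [Dof_def, hRRg]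
  simp at key' ⊢
  exact key'

end

end CLACat


namespace CLACat

theorem dag_def {X : CLACat} (R : ∀ {A B : X.Obj}, X.Hom A B → X.Hom (X.prod A B) A)
    {A B : X.Obj} (f : X.Hom A B) :
    X.dag (fun {_ _} g => R g) f = X.comp X.i1 (R f) := rfl

section
variable {X : CLACat} (R : ∀ {A B : X.Obj}, X.Hom A B → X.Hom (X.prod A B) A)
variable (hR : RDCAxioms X (fun {_ _} f => R f))
include hR

theorem dagdag_eq {A B : X.Obj} (f : X.Hom A B) :
    X.dag (fun {_ _} g => R g) (X.dag (fun {_ _} g => R g) f)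
      = X.comp X.i1 (X.comp (X.prodMap (X.i0 : X.Hom A (X.prod A B)) (X.id A))
          (X.comp (R (R f)) X.p1)) := by
  rw [dag_def, dag_def, F1 R hR X.i1 X.p1 (rlin_i1 R hR) (R f)]
  simp

end

end CLACat

/-- in a Cartesian reverse differential category, with the induced
differential `D[f] = (⟨1,0⟩×1)R[R[f]]π₁` and dagger `f† := ι₁ R[f]`, the following are
equivalent: (1) `f` is linear; (2) `ι₁(ι₀×1)R[R[f]]π₁ = f`; (3) `f†† = f`. -/
theorem linear_tfae (X : CLACat)
    (R : ∀ {A B : X.Obj}, X.Hom A B → X.Hom (X.prod A B) A)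
    (hR : RDCAxioms X (fun {_ _} f => R f))
    {A B : X.Obj} (f : X.Hom A B) :
    (X.Dof (fun {_ _} g => R g) f = X.comp X.p1 f ↔
      X.comp X.i1 (X.comp (X.prodMap (X.i0 : X.Hom A (X.prod A B)) (X.id A))
        (X.comp (R (R f)) X.p1)) = f) ∧
    (X.comp X.i1 (X.comp (X.prodMap (X.i0 : X.Hom A (X.prod A B)) (X.id A))
        (X.comp (R (R f)) X.p1)) = f ↔
      X.dag (fun {_ _} g => R g) (X.dag (fun {_ _} g => R g) f) = f) := by
  constructor
  · constructor
    · intro h1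
      have h : X.comp X.i1 (X.comp (X.prodMap (X.i0 : X.Hom A (X.prod A B)) (X.id A))
            (X.comp (R (R f)) X.p1)) = X.comp X.i1 (X.Dof (fun {_ _} g => R g) f) := by
        rw [CLACat.Dof_def]
      rw [h, h1]
      simp
    · intro h2
      have e : X.comp X.i1 (X.comp (R (R f)) X.p1)
          = X.comp X.i1 (X.comp (X.prodMap (X.i0 : X.Hom A (X.prod A B)) (X.id A))
              (X.comp (R (R f)) X.p1)) := by
        simp
      have hG : X.comp X.i1 (X.comp (R (R f)) X.p1) = f := e.trans h2
      have hlin := CLACat.dagdag_linear R hR f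
      rw [hG] at hlin
      exact hlin
  · rw [CLACat.dagdag_eq R hR f]
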